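/- Let β ∈ (0,1], let A1, A2, Q0, Q1, Q2 be positive integers, and for integers q0, q1, q2 define B′(q0,q1,q2) = {(g0,g1,g2) ∈ (1,4]³ : |g0·q0 + A1·g1·q1 + A2·g2·q2| < β}. Let B′ be the union of B′(q0,q1,q2) over all integer triples (q0,q1,q2) ≠ (0,0,0) with |q0| ≤ Q0, |q1| ≤ Q1, |q2| ≤ Q2. Then μ(B′) ≤ 504·β·( 2·min{Q2, Q0/A2} + min{Q1·Q̃2, Q0·Q̃2/A1, A2·Q̃2²/A1} + 2·min{Q1, Q0/A1} + min{Q2·Q̃1, Q0·Q̃1/A2, A1·Q̃1²/A2} ), where Q̃1 = min{Q1, 8·max{Q0, A2·Q2}/A1} and Q̃2 = min{Q2, 8·max{Q0, A1·Q1}/A2}. -/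

import Mathlib

open MeasureTheory Set

noncomputable section

lemma cover_ball {e d β : ℝ} (he : e ≠ 0) :
    {w : ℝ | |e * w + d| < β} ⊆ Metric.ball (-d / e) (β / |e|) := by
  intro w hw
  simp only [mem_setOf_eq] at hw
  rw [Metric.mem_ball, Real.dist_eq]
  have h1 : w - -d / e = (e * w + d) / e := by field_simp; ring
  rw [h1, abs_div]
  exact div_lt_div_of_pos_right hw (abs_pos.mpr he)

/-- slice in the third coordinate -/
lemma vol_le_slice3 {S : Set (ℝ × ℝ × ℝ)} (hS : MeasurableSet S)
    (hsub : ∀ p ∈ S, p.1 ∈ Set.Ioc (1:ℝ) 4 ∧ p.2.1 ∈ Set.Ioc (1:ℝ) 4)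
    {C : ℝ} (hC : 0 ≤ C)
    (h : ∀ x ∈ Set.Ioc (1:ℝ) 4, ∀ y ∈ Set.Ioc (1:ℝ) 4,
      volume {z : ℝ | (x, y, z) ∈ S} ≤ ENNReal.ofReal C) :
    volume S ≤ ENNReal.ofReal (9 * C) := by
  have key : volume S = ∫⁻ x, volume.prod volume (Prod.mk x ⁻¹' S) := by
    rw [show (volume : Measure (ℝ × ℝ × ℝ)) = (volume : Measure ℝ).prod volume from rfl,
      Measure.prod_apply hS]
    rfl
  have inner : ∀ x ∈ Set.Ioc (1:ℝ) 4,
      volume.prod volume (Prod.mk x ⁻¹' S) ≤ ENNReal.ofReal (3 * C) := by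
    intro x hx
    have hmeas : MeasurableSet (Prod.mk x ⁻¹' S) := hS.preimage measurable_prodMk_left
    rw [Measure.prod_apply hmeas]
    have hb : ∀ y : ℝ, volume (Prod.mk y ⁻¹' (Prod.mk x ⁻¹' S))
        ≤ (Set.Ioc (1:ℝ) 4).indicator (fun _ => ENNReal.ofReal C) y := by
      intro y
      by_cases hy : y ∈ Set.Ioc (1:ℝ) 4
      · rw [Set.indicator_of_mem hy]
        exact h x hx y hy
      · rw [Set.indicator_of_notMem hy]
        have : Prod.mk y ⁻¹' (Prod.mk x ⁻¹' S) = ∅ := by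
          ext z; simp only [mem_preimage, mem_empty_iff_false, iff_false]
          intro hz; exact hy (hsub _ hz).2
        simp [this]
    calc ∫⁻ y, volume (Prod.mk y ⁻¹' (Prod.mk x ⁻¹' S))
        ≤ ∫⁻ y, (Set.Ioc (1:ℝ) 4).indicator (fun _ => ENNReal.ofReal C) y :=
          lintegral_mono hb
      _ = ENNReal.ofReal C * volume (Set.Ioc (1:ℝ) 4) :=
          lintegral_indicator_const measurableSet_Ioc _
      _ = ENNReal.ofReal (3 * C) := by
          rw [Real.volume_Ioc, ← ENNReal.ofReal_mul hC]
          norm_num [mul_comm]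
  rw [key]
  have hb : ∀ x : ℝ, volume.prod volume (Prod.mk x ⁻¹' S)
      ≤ (Set.Ioc (1:ℝ) 4).indicator (fun _ => ENNReal.ofReal (3 * C)) x := by
    intro x
    by_cases hx : x ∈ Set.Ioc (1:ℝ) 4
    · rw [Set.indicator_of_mem hx]; exact inner x hx
    · rw [Set.indicator_of_notMem hx]
      have : Prod.mk x ⁻¹' S = ∅ := by
        ext yz; simp only [mem_preimage, mem_empty_iff_false, iff_false]
        intro hz; exact hx (hsub _ hz).1
      simp [this]
  calc ∫⁻ x, volume.prod volume (Prod.mk x ⁻¹' S)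
      ≤ ∫⁻ x, (Set.Ioc (1:ℝ) 4).indicator (fun _ => ENNReal.ofReal (3 * C)) x :=
        lintegral_mono hb
    _ = ENNReal.ofReal (3 * C) * volume (Set.Ioc (1:ℝ) 4) :=
        lintegral_indicator_const measurableSet_Ioc _
    _ = ENNReal.ofReal (9 * C) := by
        rw [Real.volume_Ioc, ← ENNReal.ofReal_mul (by positivity)]
        norm_num [mul_comm]
        rw [show (3:ENNReal) = ENNReal.ofReal 3 by simp, ← ENNReal.ofReal_mul (by positivity)]
        ring_nf

/-- slice in the second coordinate -/
lemma vol_le_slice2 {S : Set (ℝ × ℝ × ℝ)} (hS : MeasurableSet S)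
    (hsub : ∀ p ∈ S, p.1 ∈ Set.Ioc (1:ℝ) 4 ∧ p.2.2 ∈ Set.Ioc (1:ℝ) 4)
    {C : ℝ} (hC : 0 ≤ C)
    (h : ∀ x ∈ Set.Ioc (1:ℝ) 4, ∀ z ∈ Set.Ioc (1:ℝ) 4,
      volume {y : ℝ | (x, y, z) ∈ S} ≤ ENNReal.ofReal C) :
    volume S ≤ ENNReal.ofReal (9 * C) := by
  have key : volume S = ∫⁻ x, volume.prod volume (Prod.mk x ⁻¹' S) := by
    rw [show (volume : Measure (ℝ × ℝ × ℝ)) = (volume : Measure ℝ).prod volume from rfl,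
      Measure.prod_apply hS]
    rfl
  have inner : ∀ x ∈ Set.Ioc (1:ℝ) 4,
      volume.prod volume (Prod.mk x ⁻¹' S) ≤ ENNReal.ofReal (3 * C) := by
    intro x hx
    have hmeas : MeasurableSet (Prod.mk x ⁻¹' S) := hS.preimage measurable_prodMk_left
    rw [Measure.prod_apply_symm hmeas]
    have hb : ∀ z : ℝ, volume ((fun y => (y, z)) ⁻¹' (Prod.mk x ⁻¹' S))
        ≤ (Set.Ioc (1:ℝ) 4).indicator (fun _ => ENNReal.ofReal C) z := by
      intro z
      by_cases hz : z ∈ Set.Ioc (1:ℝ) 4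
      · rw [Set.indicator_of_mem hz]
        exact h x hx z hz
      · rw [Set.indicator_of_notMem hz]
        have : (fun y => (y, z)) ⁻¹' (Prod.mk x ⁻¹' S) = ∅ := by
          ext y; simp only [mem_preimage, mem_empty_iff_false, iff_false]
          intro hy; exact hz (hsub _ hy).2
        simp [this]
    calc ∫⁻ z, volume ((fun y => (y, z)) ⁻¹' (Prod.mk x ⁻¹' S))
        ≤ ∫⁻ z, (Set.Ioc (1:ℝ) 4).indicator (fun _ => ENNReal.ofReal C) z :=
          lintegral_mono hb
      _ = ENNReal.ofReal C * volume (Set.Ioc (1:ℝ) 4) :=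
          lintegral_indicator_const measurableSet_Ioc _
      _ = ENNReal.ofReal (3 * C) := by
          rw [Real.volume_Ioc, ← ENNReal.ofReal_mul hC]
          norm_num [mul_comm]
  rw [key]
  have hb : ∀ x : ℝ, volume.prod volume (Prod.mk x ⁻¹' S)
      ≤ (Set.Ioc (1:ℝ) 4).indicator (fun _ => ENNReal.ofReal (3 * C)) x := by
    intro x
    by_cases hx : x ∈ Set.Ioc (1:ℝ) 4
    · rw [Set.indicator_of_mem hx]; exact inner x hx
    · rw [Set.indicator_of_notMem hx]
      have : Prod.mk x ⁻¹' S = ∅ := by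
        ext yz; simp only [mem_preimage, mem_empty_iff_false, iff_false]
        intro hz; exact hx (hsub _ hz).1
      simp [this]
  calc ∫⁻ x, volume.prod volume (Prod.mk x ⁻¹' S)
      ≤ ∫⁻ x, (Set.Ioc (1:ℝ) 4).indicator (fun _ => ENNReal.ofReal (3 * C)) x :=
        lintegral_mono hb
    _ = ENNReal.ofReal (3 * C) * volume (Set.Ioc (1:ℝ) 4) :=
        lintegral_indicator_const measurableSet_Ioc _
    _ = ENNReal.ofReal (9 * C) := by
        rw [Real.volume_Ioc, ← ENNReal.ofReal_mul (by positivity)]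
        norm_num [mul_comm]
        rw [show (3:ENNReal) = ENNReal.ofReal 3 by simp, ← ENNReal.ofReal_mul (by positivity)]
        ring_nf

/-- key overlap counting bound: union over all integers q0 of near-solutions,
in one coordinate, has measure at most 12β. -/
lemma overlap_slice {β x c e : ℝ} (hβ0 : 0 < β) (hβ1 : β ≤ 1)
    (hx : x ∈ Set.Ioc (1:ℝ) 4) (he : 1 ≤ |e|) :
    volume {z : ℝ | z ∈ Set.Ioc (1:ℝ) 4 ∧ ∃ q0 : ℤ, |x * q0 + c + e * z| < β}
      ≤ ENNReal.ofReal (12 * β) := by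
  have he0 : e ≠ 0 := by intro h; rw [h] at he; simp at he; linarith
  have hepos : (0:ℝ) < |e| := abs_pos.mpr he0
  have hx1 : (1:ℝ) < x := hx.1
  have hx0 : (0:ℝ) < x := by linarith
  set p : ℝ := -β - c - max e (4 * e) with hp
  set q : ℝ := β - c - min e (4 * e) with hq
  have hqp : q - p = 2 * β + 3 * |e| := by
    have := max_sub_min_eq_abs e (4 * e)
    have h3 : |4 * e - e| = 3 * |e| := by
      rw [show (4:ℝ) * e - e = 3 * e by ring, abs_mul]
      norm_num
    rw [hp, hq]
    have : max e (4*e) - min e (4*e) = 3 * |e| := by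
      rw [← h3, ← this]
    linarith [this]
  set F : Finset ℤ := Finset.Icc ⌈p / x⌉ ⌊q / x⌋ with hF
  have hsub : {z : ℝ | z ∈ Set.Ioc (1:ℝ) 4 ∧ ∃ q0 : ℤ, |x * q0 + c + e * z| < β}
      ⊆ ⋃ n ∈ F, Metric.ball (-(x * n + c) / e) (β / |e|) := by
    rintro z ⟨hz, q0, habs⟩
    have hez_le : e * z ≤ max e (4 * e) := by
      rcases le_or_gt 0 e with h | h
      · exact le_max_of_le_right (by nlinarith [hz.2])
      · exact le_max_of_le_left (by nlinarith [hz.1])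
    have hez_ge : min e (4 * e) ≤ e * z := by
      rcases le_or_gt 0 e with h | h
      · exact (min_le_left _ _).trans (by nlinarith [hz.1])
      · exact (min_le_right _ _).trans (by nlinarith [hz.2])
    rw [abs_lt] at habs
    have h1 : p < x * q0 := by rw [hp]; nlinarith [habs.1]
    have h2 : x * q0 < q := by rw [hq]; nlinarith [habs.2]
    have hmem : q0 ∈ F := by
      rw [hF, Finset.mem_Icc]
      constructor
      · exact Int.ceil_le.mpr (by rw [div_le_iff₀ hx0]; nlinarith)
      · exact Int.le_floor.mpr (by rw [le_div_iff₀ hx0]; nlinarith)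
    refine Set.mem_biUnion hmem ?_
    rw [Metric.mem_ball, Real.dist_eq]
    have h3 : z - -(x * q0 + c) / e = (x * q0 + c + e * z) / e := by field_simp; ring
    rw [h3, abs_div]
    refine div_lt_div_of_pos_right ?_ hepos
    rw [abs_lt]; exact habs
  calc volume {z : ℝ | z ∈ Set.Ioc (1:ℝ) 4 ∧ ∃ q0 : ℤ, |x * q0 + c + e * z| < β}
      ≤ volume (⋃ n ∈ F, Metric.ball (-(x * n + c) / e) (β / |e|)) := measure_mono hsub
    _ ≤ ∑ n ∈ F, volume (Metric.ball (-(x * n + c) / e) (β / |e|)) :=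
        measure_biUnion_finset_le F _
    _ = ∑ n ∈ F, ENNReal.ofReal (2 * (β / |e|)) := by
        simp [Real.volume_ball]
    _ = (F.card : ENNReal) * ENNReal.ofReal (2 * (β / |e|)) := by
        rw [Finset.sum_const, nsmul_eq_mul]
    _ ≤ ENNReal.ofReal (6 * |e|) * ENNReal.ofReal (2 * (β / |e|)) := by
        have hcard : (F.card : ℝ) ≤ 6 * |e| := by
          rcases le_or_gt ⌈p / x⌉ ⌊q / x⌋ with hle | hlt
          · have : (F.card : ℤ) = ⌊q / x⌋ + 1 - ⌈p / x⌉ := by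
              rw [hF, Int.card_Icc, Int.toNat_of_nonneg (by omega)]
            have hcr : (F.card : ℝ) = (⌊q / x⌋ : ℝ) + 1 - (⌈p / x⌉ : ℝ) := by
              exact_mod_cast congrArg (Int.cast : ℤ → ℝ) this
            have hfl : (⌊q / x⌋ : ℝ) ≤ q / x := Int.floor_le _
            have hce : p / x ≤ (⌈p / x⌉ : ℝ) := Int.le_ceil _
            have hdiv : q / x - p / x ≤ q - p := by
              rw [div_sub_div_same]
              exact div_le_self (by nlinarith [hqp, abs_nonneg e]) (le_of_lt hx1)
            rw [hcr]
            have : q - p ≤ 2 + 3 * |e| := by rw [hqp]; linarith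
            nlinarith [hfl, hce, hdiv]
          · have : F.card = 0 := by rw [hF]; simp [Finset.Icc_eq_empty_of_lt hlt]
            rw [this]; simp [abs_nonneg]
        exact mul_le_mul_left (by rw [← ENNReal.ofReal_natCast]; exact ENNReal.ofReal_le_ofReal hcard) _
    _ = ENNReal.ofReal (6 * |e| * (2 * (β / |e|))) := by
        rw [← ENNReal.ofReal_mul (by positivity)]
    _ = ENNReal.ofReal (12 * β) := by
        congr 1; field_simp; ring

def Bset (A1 A2 : ℕ) (β : ℝ) (q0 q1 q2 : ℤ) : Set (ℝ × ℝ × ℝ) :=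
  {g : ℝ × ℝ × ℝ |
    g.1 ∈ Set.Ioc (1:ℝ) 4 ∧ g.2.1 ∈ Set.Ioc (1:ℝ) 4 ∧ g.2.2 ∈ Set.Ioc (1:ℝ) 4 ∧
    |g.1 * (q0 : ℝ) + (A1 : ℝ) * g.2.1 * (q1 : ℝ) + (A2 : ℝ) * g.2.2 * (q2 : ℝ)| < β}

lemma measurable_Bset (A1 A2 : ℕ) (β : ℝ) (q0 q1 q2 : ℤ) :
    MeasurableSet (Bset A1 A2 β q0 q1 q2) := by
  have h : Bset A1 A2 β q0 q1 q2 =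
      (Set.Ioc (1:ℝ) 4 ×ˢ Set.Ioc (1:ℝ) 4 ×ˢ Set.Ioc (1:ℝ) 4) ∩
      {g : ℝ × ℝ × ℝ |
        |g.1 * (q0 : ℝ) + (A1 : ℝ) * g.2.1 * (q1 : ℝ) + (A2 : ℝ) * g.2.2 * (q2 : ℝ)| < β} := by
    ext g
    simp only [Bset, Set.mem_inter_iff, Set.mem_prod, Set.mem_setOf_eq]
    tauto
  rw [h]
  refine MeasurableSet.inter (measurableSet_Ioc.prod (measurableSet_Ioc.prod measurableSet_Ioc)) ?_
  have : Measurable fun g : ℝ × ℝ × ℝ =>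
      |g.1 * (q0 : ℝ) + (A1 : ℝ) * g.2.1 * (q1 : ℝ) + (A2 : ℝ) * g.2.2 * (q2 : ℝ)| := by
    fun_prop
  exact measurableSet_lt this measurable_const

lemma card_le_two_mul {F : Finset ℤ} {N : ℝ} (hN : 0 ≤ N)
    (h : ∀ x ∈ F, x ≠ 0 ∧ |(x:ℝ)| ≤ N) : (F.card : ℝ) ≤ 2 * N := by
  set n : ℤ := ⌊N⌋ with hn
  have hn0 : 0 ≤ n := Int.floor_nonneg.mpr hN
  have hsub : F ⊆ Finset.Icc (-n) (-1) ∪ Finset.Icc 1 n := by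
    intro x hx
    obtain ⟨hx0, hxN⟩ := h x hx
    have habs : |x| ≤ n := by
      rw [hn]
      apply Int.le_floor.mpr
      rwa [Int.cast_abs]
    rcases lt_or_gt_of_ne hx0 with hlt | hgt
    · apply Finset.mem_union_left
      rw [Finset.mem_Icc]
      constructor
      · rw [abs_of_neg hlt] at habs; omega
      · omega
    · apply Finset.mem_union_right
      rw [Finset.mem_Icc]
      constructor
      · omega
      · rw [abs_of_pos hgt] at habs; omega
  have hc : F.card ≤ n.toNat + n.toNat := by
    calc F.card ≤ (Finset.Icc (-n) (-1) ∪ Finset.Icc 1 n).card := Finset.card_le_card hsub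
      _ ≤ (Finset.Icc (-n) (-1)).card + (Finset.Icc 1 n).card := Finset.card_union_le _ _
      _ = n.toNat + n.toNat := by
          rw [Int.card_Icc, Int.card_Icc]
          congr 1 <;> omega
  have : (F.card : ℝ) ≤ (n.toNat : ℝ) + (n.toNat : ℝ) := by exact_mod_cast hc
  have hnN : (n.toNat : ℝ) ≤ N := by
    have h2 : ((n.toNat : ℤ) : ℝ) = (n : ℝ) := by exact_mod_cast Int.toNat_of_nonneg hn0
    rw [show ((n.toNat : ℕ) : ℝ) = ((n.toNat : ℤ) : ℝ) by push_cast; ring, h2, hn]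
    exact_mod_cast Int.floor_le N
  linarith

lemma finset_sum_le_card_mul {ι : Type*} {F : Finset ι} {f : ι → ENNReal} {t s : ℝ}
    (h : ∀ i ∈ F, f i ≤ ENNReal.ofReal t) (hcard : (F.card : ℝ) ≤ s) (hs : 0 ≤ s) :
    ∑ i ∈ F, f i ≤ ENNReal.ofReal (s * t) := by
  calc ∑ i ∈ F, f i ≤ ∑ _i ∈ F, ENNReal.ofReal t := Finset.sum_le_sum h
    _ = (F.card : ENNReal) * ENNReal.ofReal t := by rw [Finset.sum_const, nsmul_eq_mul]
    _ ≤ ENNReal.ofReal s * ENNReal.ofReal t := by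
        refine mul_le_mul_left ?_ _
        rw [← ENNReal.ofReal_natCast]
        exact ENNReal.ofReal_le_ofReal hcard
    _ = ENNReal.ofReal (s * t) := (ENNReal.ofReal_mul hs).symm

/-- slab volume via third coordinate -/
lemma vol_Bs3 {A1 A2 : ℕ} {β : ℝ} (hβ0 : 0 ≤ β) {q0 q1 q2 : ℤ} (hA2 : 0 < A2) (hq2 : q2 ≠ 0) :
    volume (Bset A1 A2 β q0 q1 q2)
      ≤ ENNReal.ofReal (18 * β / ((A2:ℝ) * |(q2:ℝ)|)) := by
  have hA2r : (0:ℝ) < A2 := by exact_mod_cast hA2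
  have hq2r : (0:ℝ) < |(q2:ℝ)| := by rw [abs_pos]; exact_mod_cast hq2
  have he : (A2:ℝ) * (q2:ℝ) ≠ 0 :=
    mul_ne_zero (by positivity) (by exact_mod_cast hq2)
  have habs : |(A2:ℝ) * (q2:ℝ)| = (A2:ℝ) * |(q2:ℝ)| := by
    rw [abs_mul, abs_of_nonneg hA2r.le]
  have H : volume (Bset A1 A2 β q0 q1 q2)
      ≤ ENNReal.ofReal (9 * (2 * (β / ((A2:ℝ) * |(q2:ℝ)|)))) := by
    refine vol_le_slice3 (measurable_Bset A1 A2 β q0 q1 q2)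
      (fun p hp => ⟨hp.1, hp.2.1⟩) (by positivity) ?_
    intro x hx y hy
    have hsub : {z : ℝ | (x, y, z) ∈ Bset A1 A2 β q0 q1 q2}
        ⊆ Metric.ball (-(x * q0 + (A1:ℝ) * y * q1) / ((A2:ℝ) * (q2:ℝ)))
          (β / |(A2:ℝ) * (q2:ℝ)|) := by
      intro z hz
      apply cover_ball he
      simp only [Set.mem_setOf_eq]
      have h1 := hz.2.2.2
      have h2 : (A2:ℝ) * (q2:ℝ) * z + (x * q0 + (A1:ℝ) * y * q1)
          = x * (q0:ℝ) + (A1:ℝ) * y * (q1:ℝ) + (A2:ℝ) * z * (q2:ℝ) := by ring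
      rw [h2]
      exact h1
    calc volume {z : ℝ | (x, y, z) ∈ Bset A1 A2 β q0 q1 q2}
        ≤ volume (Metric.ball (-(x * q0 + (A1:ℝ) * y * q1) / ((A2:ℝ) * (q2:ℝ)))
            (β / |(A2:ℝ) * (q2:ℝ)|)) := measure_mono hsub
      _ = ENNReal.ofReal (2 * (β / ((A2:ℝ) * |(q2:ℝ)|))) := by
          rw [Real.volume_ball, habs]
  refine H.trans (le_of_eq ?_)
  congr 1
  ring

/-- slab volume via second coordinate -/
lemma vol_Bs2 {A1 A2 : ℕ} {β : ℝ} (hβ0 : 0 ≤ β) {q0 q1 q2 : ℤ} (hA1 : 0 < A1) (hq1 : q1 ≠ 0) :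
    volume (Bset A1 A2 β q0 q1 q2)
      ≤ ENNReal.ofReal (18 * β / ((A1:ℝ) * |(q1:ℝ)|)) := by
  have hA1r : (0:ℝ) < A1 := by exact_mod_cast hA1
  have hq1r : (0:ℝ) < |(q1:ℝ)| := by rw [abs_pos]; exact_mod_cast hq1
  have he : (A1:ℝ) * (q1:ℝ) ≠ 0 :=
    mul_ne_zero (by positivity) (by exact_mod_cast hq1)
  have habs : |(A1:ℝ) * (q1:ℝ)| = (A1:ℝ) * |(q1:ℝ)| := by
    rw [abs_mul, abs_of_nonneg hA1r.le]
  have H : volume (Bset A1 A2 β q0 q1 q2)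
      ≤ ENNReal.ofReal (9 * (2 * (β / ((A1:ℝ) * |(q1:ℝ)|)))) := by
    refine vol_le_slice2 (measurable_Bset A1 A2 β q0 q1 q2)
      (fun p hp => ⟨hp.1, hp.2.2.1⟩) (by positivity) ?_
    intro x hx z hz
    have hsub : {y : ℝ | (x, y, z) ∈ Bset A1 A2 β q0 q1 q2}
        ⊆ Metric.ball (-(x * q0 + (A2:ℝ) * z * q2) / ((A1:ℝ) * (q1:ℝ)))
          (β / |(A1:ℝ) * (q1:ℝ)|) := by
      intro y hy
      apply cover_ball he
      simp only [Set.mem_setOf_eq]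
      have h1 := hy.2.2.2
      have h2 : (A1:ℝ) * (q1:ℝ) * y + (x * q0 + (A2:ℝ) * z * q2)
          = x * (q0:ℝ) + (A1:ℝ) * y * (q1:ℝ) + (A2:ℝ) * z * (q2:ℝ) := by ring
      rw [h2]
      exact h1
    calc volume {y : ℝ | (x, y, z) ∈ Bset A1 A2 β q0 q1 q2}
        ≤ volume (Metric.ball (-(x * q0 + (A2:ℝ) * z * q2) / ((A1:ℝ) * (q1:ℝ)))
            (β / |(A1:ℝ) * (q1:ℝ)|)) := measure_mono hsub
      _ = ENNReal.ofReal (2 * (β / ((A1:ℝ) * |(q1:ℝ)|))) := by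
          rw [Real.volume_ball, habs]
  refine H.trans (le_of_eq ?_)
  congr 1
  ring

/-- union over q0, overlap bound, third coordinate (q2 ≠ 0) -/
lemma vol_E3 {A1 A2 Q0 : ℕ} {β : ℝ} (hβ0 : 0 < β) (hβ1 : β ≤ 1) (hA2 : 0 < A2)
    {q1 q2 : ℤ} (hq2 : q2 ≠ 0) :
    volume (⋃ q0 ∈ Finset.Icc (-(Q0:ℤ)) (Q0:ℤ), Bset A1 A2 β q0 q1 q2)
      ≤ ENNReal.ofReal (108 * β) := by
  have hA2r : (1:ℝ) ≤ A2 := by exact_mod_cast hA2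
  have hq2r : (1:ℝ) ≤ |(q2:ℝ)| := by exact_mod_cast Int.one_le_abs hq2
  have habs : |(A2:ℝ) * (q2:ℝ)| = (A2:ℝ) * |(q2:ℝ)| := by
    rw [abs_mul, abs_of_nonneg (by linarith : (0:ℝ) ≤ (A2:ℝ))]
  have he : (1:ℝ) ≤ |(A2:ℝ) * (q2:ℝ)| := by
    rw [habs]; nlinarith
  have H : volume (⋃ q0 ∈ Finset.Icc (-(Q0:ℤ)) (Q0:ℤ), Bset A1 A2 β q0 q1 q2)
      ≤ ENNReal.ofReal (9 * (12 * β)) := by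
    refine vol_le_slice3 ?_ ?_ (by positivity) ?_
    · exact (Finset.Icc (-(Q0:ℤ)) (Q0:ℤ)).measurableSet_biUnion
        (fun q0 _ => measurable_Bset A1 A2 β q0 q1 q2)
    · rintro p hp
      simp only [Set.mem_iUnion] at hp
      obtain ⟨q0, _, hp⟩ := hp
      exact ⟨hp.1, hp.2.1⟩
    · intro x hx y hy
      have hsub : {z : ℝ | (x, y, z) ∈ ⋃ q0 ∈ Finset.Icc (-(Q0:ℤ)) (Q0:ℤ), Bset A1 A2 β q0 q1 q2}
          ⊆ {z : ℝ | z ∈ Set.Ioc (1:ℝ) 4 ∧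
              ∃ n : ℤ, |x * n + (A1:ℝ) * y * q1 + ((A2:ℝ) * (q2:ℝ)) * z| < β} := by
        intro z hz
        simp only [Set.mem_setOf_eq, Set.mem_iUnion] at hz ⊢
        obtain ⟨q0, _, hz⟩ := hz
        refine ⟨hz.2.2.1, q0, ?_⟩
        have h2 : x * (q0:ℝ) + (A1:ℝ) * y * q1 + ((A2:ℝ) * (q2:ℝ)) * z
            = x * (q0:ℝ) + (A1:ℝ) * y * (q1:ℝ) + (A2:ℝ) * z * (q2:ℝ) := by ring
        rw [h2]
        exact hz.2.2.2
      exact (measure_mono hsub).trans (overlap_slice hβ0 hβ1 hx he)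
  refine H.trans (le_of_eq ?_)
  congr 1
  ring

/-- union over q0, overlap bound, second coordinate (q1 ≠ 0) -/
lemma vol_E2 {A1 A2 Q0 : ℕ} {β : ℝ} (hβ0 : 0 < β) (hβ1 : β ≤ 1) (hA1 : 0 < A1)
    {q1 q2 : ℤ} (hq1 : q1 ≠ 0) :
    volume (⋃ q0 ∈ Finset.Icc (-(Q0:ℤ)) (Q0:ℤ), Bset A1 A2 β q0 q1 q2)
      ≤ ENNReal.ofReal (108 * β) := by
  have hA1r : (1:ℝ) ≤ A1 := by exact_mod_cast hA1
  have hq1r : (1:ℝ) ≤ |(q1:ℝ)| := by exact_mod_cast Int.one_le_abs hq1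
  have habs : |(A1:ℝ) * (q1:ℝ)| = (A1:ℝ) * |(q1:ℝ)| := by
    rw [abs_mul, abs_of_nonneg (by linarith : (0:ℝ) ≤ (A1:ℝ))]
  have he : (1:ℝ) ≤ |(A1:ℝ) * (q1:ℝ)| := by
    rw [habs]; nlinarith
  have H : volume (⋃ q0 ∈ Finset.Icc (-(Q0:ℤ)) (Q0:ℤ), Bset A1 A2 β q0 q1 q2)
      ≤ ENNReal.ofReal (9 * (12 * β)) := by
    refine vol_le_slice2 ?_ ?_ (by positivity) ?_
    · exact (Finset.Icc (-(Q0:ℤ)) (Q0:ℤ)).measurableSet_biUnion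
        (fun q0 _ => measurable_Bset A1 A2 β q0 q1 q2)
    · rintro p hp
      simp only [Set.mem_iUnion] at hp
      obtain ⟨q0, _, hp⟩ := hp
      exact ⟨hp.1, hp.2.2.1⟩
    · intro x hx z hz
      have hsub : {y : ℝ | (x, y, z) ∈ ⋃ q0 ∈ Finset.Icc (-(Q0:ℤ)) (Q0:ℤ), Bset A1 A2 β q0 q1 q2}
          ⊆ {y : ℝ | y ∈ Set.Ioc (1:ℝ) 4 ∧
              ∃ n : ℤ, |x * n + (A2:ℝ) * z * q2 + ((A1:ℝ) * (q1:ℝ)) * y| < β} := by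
        intro y hy
        simp only [Set.mem_setOf_eq, Set.mem_iUnion] at hy ⊢
        obtain ⟨q0, _, hy⟩ := hy
        refine ⟨hy.2.1, q0, ?_⟩
        have h2 : x * (q0:ℝ) + (A2:ℝ) * z * q2 + ((A1:ℝ) * (q1:ℝ)) * y
            = x * (q0:ℝ) + (A1:ℝ) * y * (q1:ℝ) + (A2:ℝ) * z * (q2:ℝ) := by ring
        rw [h2]
        exact hy.2.2.2
      exact (measure_mono hsub).trans (overlap_slice hβ0 hβ1 hx he)
  refine H.trans (le_of_eq ?_)
  congr 1
  ring
section DED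
lemma int_le_of_lt_add {a b : ℤ} {β : ℝ} (hβ1 : β ≤ 1) (h : (a:ℝ) < (b:ℝ) + β) : a ≤ b := by
  have h2 : (a:ℝ) < (b:ℝ) + 1 := by linarith
  have h3 : a < b + 1 := by exact_mod_cast h2
  omega

lemma bound4 {a z q Q : ℝ} (ha : 0 ≤ a) (hz : 1 < z) (hz4 : z ≤ 4) (hq : |q| ≤ Q) :
    |a * z * q| ≤ 4 * a * Q := by
  rw [abs_mul, abs_mul, abs_of_nonneg ha, abs_of_nonneg (by linarith : (0:ℝ) ≤ z)]
  have h1 : 0 ≤ |q| := abs_nonneg q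
  nlinarith [mul_nonneg ha h1, mul_nonneg (mul_nonneg ha h1) (by linarith : (0:ℝ) ≤ 4 - z),
    mul_nonneg ha (sub_nonneg.mpr hq)]

lemma bound4' {z q Q : ℝ} (hz : 1 < z) (hz4 : z ≤ 4) (hq : |q| ≤ Q) : |z * q| ≤ 4 * Q := by
  have h := bound4 (zero_le_one) hz hz4 hq
  rw [one_mul] at h
  calc |z * q| = |1 * z * q| := by rw [one_mul]
    _ ≤ 4 * 1 * Q := bound4 zero_le_one hz hz4 hq
    _ = 4 * Q := by ring

lemma caseAB {β x w : ℝ} {c Q0 : ℕ} {q0 qq : ℤ} (hβ0 : 0 < β) (hβ1 : β ≤ 1)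
    (hx : x ∈ Set.Ioc (1:ℝ) 4) (hw : w ∈ Set.Ioc (1:ℝ) 4) (hc : 0 < c) (hqq : qq ≠ 0)
    (hq0 : |q0| ≤ (Q0:ℤ))
    (habs : |x * (q0:ℝ) + (c:ℝ) * w * (qq:ℝ)| < β) :
    q0 * qq < 0 ∧ 1 ≤ |q0| ∧ |q0| ≤ 4 * (c:ℤ) * |qq| ∧ (c:ℤ) * |qq| ≤ 4 * (Q0:ℤ) := by
  have hcr : (1:ℝ) ≤ (c:ℝ) := by exact_mod_cast hc
  have hqqr : (1:ℝ) ≤ |(qq:ℝ)| := by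
    rw [← Int.cast_abs]; exact_mod_cast Int.one_le_abs hqq
  have hab := abs_lt.mp habs
  have hswq : |(c:ℝ) * w * (qq:ℝ)| = (c:ℝ) * w * |(qq:ℝ)| := by
    rw [abs_mul, abs_of_nonneg (by nlinarith [hw.1] : (0:ℝ) ≤ (c:ℝ) * w)]
  have hsx : |x * (q0:ℝ)| = x * |(q0:ℝ)| := by
    rw [abs_mul, abs_of_nonneg (by linarith [hx.1] : (0:ℝ) ≤ x)]
  have hq0ne : q0 ≠ 0 := by
    intro h0
    rw [h0] at habs
    simp only [Int.cast_zero, mul_zero, zero_add] at habs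
    rw [hswq] at habs
    have k1 : w ≤ (c:ℝ) * w := le_mul_of_one_le_left (by linarith [hw.1]) hcr
    have k2 : (c:ℝ) * w ≤ (c:ℝ) * w * |(qq:ℝ)| :=
      le_mul_of_one_le_right (by nlinarith [hw.1]) hqqr
    linarith [hw.1]
  have hq0r : (1:ℝ) ≤ |(q0:ℝ)| := by
    rw [← Int.cast_abs]; exact_mod_cast Int.one_le_abs hq0ne
  have hq0Q : |(q0:ℝ)| ≤ (Q0:ℝ) := by
    rw [← Int.cast_abs]; exact_mod_cast hq0
  have hx0 : (0:ℝ) < x := by linarith [hx.1]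
  have hcw0 : (0:ℝ) ≤ (c:ℝ) * w := by nlinarith [hw.1]
  have hsign : q0 * qq < 0 := by
    rcases lt_trichotomy (q0 * qq) 0 with h | h | h
    · exact h
    · exact absurd (mul_eq_zero.mp h) (by push_neg; exact ⟨hq0ne, hqq⟩)
    · exfalso
      rcases lt_trichotomy q0 0 with hq | hq | hq
      · have hqq' : qq < 0 := by
          rcases lt_trichotomy qq 0 with h' | h' | h'
          · exact h'
          · exact absurd h' hqq
          · nlinarith
        have r1 : (q0:ℝ) ≤ -1 := by exact_mod_cast (by omega : q0 ≤ -1)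
        have r2 : (qq:ℝ) ≤ -1 := by exact_mod_cast (by omega : qq ≤ -1)
        have s1 : x * (q0:ℝ) ≤ x * (-1) := mul_le_mul_of_nonneg_left r1 hx0.le
        have s2 : (c:ℝ) * w * (qq:ℝ) ≤ (c:ℝ) * w * (-1) := mul_le_mul_of_nonneg_left r2 hcw0
        have s3 : w ≤ (c:ℝ) * w := le_mul_of_one_le_left (by linarith [hw.1]) hcr
        linarith [hab.1, hx.1, hw.1]
      · exact hq0ne hq
      · have hqq' : 0 < qq := by
          rcases lt_trichotomy qq 0 with h' | h' | h'
          · nlinarith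
          · exact absurd h' hqq
          · exact h'
        have r1 : (1:ℝ) ≤ (q0:ℝ) := by exact_mod_cast hq
        have r2 : (1:ℝ) ≤ (qq:ℝ) := by exact_mod_cast hqq'
        have s1 : x * 1 ≤ x * (q0:ℝ) := mul_le_mul_of_nonneg_left r1 hx0.le
        have s2 : (c:ℝ) * w * 1 ≤ (c:ℝ) * w * (qq:ℝ) := mul_le_mul_of_nonneg_left r2 hcw0
        have s3 : w ≤ (c:ℝ) * w := le_mul_of_one_le_left (by linarith [hw.1]) hcr
        linarith [hab.2, hx.1, hw.1]
  have tA : |x * (q0:ℝ)| - |(c:ℝ) * w * (qq:ℝ)| ≤ |x * q0 + (c:ℝ) * w * (qq:ℝ)| := by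
    have e : x * (q0:ℝ) - -((c:ℝ) * w * (qq:ℝ)) = x * q0 + (c:ℝ) * w * (qq:ℝ) := by ring
    have h := abs_sub_abs_le_abs_sub (x * (q0:ℝ)) (-((c:ℝ) * w * (qq:ℝ)))
    rwa [e, abs_neg] at h
  have tB : |(c:ℝ) * w * (qq:ℝ)| - |x * (q0:ℝ)| ≤ |x * q0 + (c:ℝ) * w * (qq:ℝ)| := by
    have e : (c:ℝ) * w * (qq:ℝ) - -(x * (q0:ℝ)) = x * q0 + (c:ℝ) * w * (qq:ℝ) := by ring
    have h := abs_sub_abs_le_abs_sub ((c:ℝ) * w * (qq:ℝ)) (-(x * (q0:ℝ)))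
    rwa [e, abs_neg] at h
  refine ⟨hsign, Int.one_le_abs hq0ne, ?_, ?_⟩
  · have u1 : |(q0:ℝ)| ≤ x * |(q0:ℝ)| := le_mul_of_one_le_left (abs_nonneg _) hx.1.le
    have u2 : (c:ℝ) * w * |(qq:ℝ)| ≤ 4 * (c:ℝ) * |(qq:ℝ)| := by
      nlinarith [mul_nonneg (Nat.cast_nonneg (α := ℝ) c) (abs_nonneg (qq:ℝ)), hw.2]
    have t2 : ((|q0| : ℤ) : ℝ) < ((4 * (c:ℤ) * |qq| : ℤ) : ℝ) + β := by
      push_cast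
      rw [hsx, hswq] at tA
      linarith [habs, u1, u2, tA]
    exact int_le_of_lt_add hβ1 t2
  · have u1 : x * |(q0:ℝ)| ≤ 4 * (Q0:ℝ) := by nlinarith [hx.2, abs_nonneg (q0:ℝ)]
    have u2 : (c:ℝ) * |(qq:ℝ)| ≤ (c:ℝ) * w * |(qq:ℝ)| := by
      nlinarith [mul_nonneg (Nat.cast_nonneg (α := ℝ) c) (abs_nonneg (qq:ℝ)), hw.1]
    have t2 : (((c:ℤ) * |qq| : ℤ) : ℝ) < ((4 * (Q0:ℤ) : ℤ) : ℝ) + β := by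
      push_cast
      rw [hsx, hswq] at tB
      linarith [habs, u1, u2, tB]
    exact int_le_of_lt_add hβ1 t2

lemma caseC1 {β x y z : ℝ} {A1 A2 Q0 Q2 : ℕ} {q0 q1 q2 : ℤ} (hβ1 : β ≤ 1)
    (hx : x ∈ Set.Ioc (1:ℝ) 4) (hy : y ∈ Set.Ioc (1:ℝ) 4) (hz : z ∈ Set.Ioc (1:ℝ) 4)
    (hA1 : 0 < A1)
    (hq0 : |q0| ≤ (Q0:ℤ)) (hq2 : |q2| ≤ (Q2:ℤ))
    (habs : |x * (q0:ℝ) + (A1:ℝ) * y * (q1:ℝ) + (A2:ℝ) * z * (q2:ℝ)| < β) :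
    (A1:ℤ) * |q1| ≤ 4 * (Q0:ℤ) + 4 * (A2:ℤ) * (Q2:ℤ) := by
  have hq0r : |(q0:ℝ)| ≤ (Q0:ℝ) := by rw [← Int.cast_abs]; exact_mod_cast hq0
  have hq2r : |(q2:ℝ)| ≤ (Q2:ℝ) := by rw [← Int.cast_abs]; exact_mod_cast hq2
  have hA1r : (1:ℝ) ≤ (A1:ℝ) := by exact_mod_cast hA1
  rcases eq_or_ne q1 0 with h0 | h0
  · rw [h0]
    simp only [abs_zero, mul_zero]
    positivity
  have hq1r : (1:ℝ) ≤ |(q1:ℝ)| := by rw [← Int.cast_abs]; exact_mod_cast Int.one_le_abs h0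
  have h1 : |x * (q0:ℝ)| ≤ 4 * (Q0:ℝ) := bound4' hx.1 hx.2 hq0r
  have h2 : |(A2:ℝ) * z * (q2:ℝ)| ≤ 4 * (A2:ℝ) * (Q2:ℝ) :=
    bound4 (Nat.cast_nonneg _) hz.1 hz.2 hq2r
  have h3 : |(A1:ℝ) * y * (q1:ℝ)| = (A1:ℝ) * y * |(q1:ℝ)| := by
    rw [abs_mul, abs_of_nonneg (by nlinarith [hy.1] : (0:ℝ) ≤ (A1:ℝ) * y)]
  have tA : |(A1:ℝ) * y * (q1:ℝ)| - |x * (q0:ℝ) + (A2:ℝ) * z * (q2:ℝ)|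
      ≤ |x * (q0:ℝ) + (A1:ℝ) * y * (q1:ℝ) + (A2:ℝ) * z * (q2:ℝ)| := by
    have e : (A1:ℝ) * y * (q1:ℝ) - -(x * (q0:ℝ) + (A2:ℝ) * z * (q2:ℝ))
        = x * (q0:ℝ) + (A1:ℝ) * y * (q1:ℝ) + (A2:ℝ) * z * (q2:ℝ) := by ring
    have h := abs_sub_abs_le_abs_sub ((A1:ℝ) * y * (q1:ℝ)) (-(x * (q0:ℝ) + (A2:ℝ) * z * (q2:ℝ)))
    rwa [e, abs_neg] at h
  have tB : |x * (q0:ℝ) + (A2:ℝ) * z * (q2:ℝ)| ≤ |x * (q0:ℝ)| + |(A2:ℝ) * z * (q2:ℝ)| :=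
    abs_add_le _ _
  have u1 : (A1:ℝ) * |(q1:ℝ)| ≤ (A1:ℝ) * y * |(q1:ℝ)| := by
    nlinarith [mul_nonneg (Nat.cast_nonneg (α := ℝ) A1) (abs_nonneg (q1:ℝ)), hy.1]
  have t2 : (((A1:ℤ) * |q1| : ℤ) : ℝ) < ((4 * (Q0:ℤ) + 4 * (A2:ℤ) * (Q2:ℤ) : ℤ) : ℝ) + β := by
    push_cast
    rw [h3] at tA
    linarith [habs, h1, h2, tA, tB, u1]
  exact int_le_of_lt_add hβ1 t2

lemma caseC2 {β x y z : ℝ} {A1 A2 Q0 Q1 : ℕ} {q0 q1 q2 : ℤ} (hβ1 : β ≤ 1)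
    (hx : x ∈ Set.Ioc (1:ℝ) 4) (hy : y ∈ Set.Ioc (1:ℝ) 4) (hz : z ∈ Set.Ioc (1:ℝ) 4)
    (hA2 : 0 < A2)
    (hq0 : |q0| ≤ (Q0:ℤ)) (hq1 : |q1| ≤ (Q1:ℤ))
    (habs : |x * (q0:ℝ) + (A1:ℝ) * y * (q1:ℝ) + (A2:ℝ) * z * (q2:ℝ)| < β) :
    (A2:ℤ) * |q2| ≤ 4 * (Q0:ℤ) + 4 * (A1:ℤ) * (Q1:ℤ) := by
  have hq0r : |(q0:ℝ)| ≤ (Q0:ℝ) := by rw [← Int.cast_abs]; exact_mod_cast hq0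
  have hq1r : |(q1:ℝ)| ≤ (Q1:ℝ) := by rw [← Int.cast_abs]; exact_mod_cast hq1
  have hA2r : (1:ℝ) ≤ (A2:ℝ) := by exact_mod_cast hA2
  rcases eq_or_ne q2 0 with h0 | h0
  · rw [h0]
    simp only [abs_zero, mul_zero]
    positivity
  have hq2r : (1:ℝ) ≤ |(q2:ℝ)| := by rw [← Int.cast_abs]; exact_mod_cast Int.one_le_abs h0
  have h1 : |x * (q0:ℝ)| ≤ 4 * (Q0:ℝ) := bound4' hx.1 hx.2 hq0r
  have h2 : |(A1:ℝ) * y * (q1:ℝ)| ≤ 4 * (A1:ℝ) * (Q1:ℝ) :=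
    bound4 (Nat.cast_nonneg _) hy.1 hy.2 hq1r
  have h3 : |(A2:ℝ) * z * (q2:ℝ)| = (A2:ℝ) * z * |(q2:ℝ)| := by
    rw [abs_mul, abs_of_nonneg (by nlinarith [hz.1] : (0:ℝ) ≤ (A2:ℝ) * z)]
  have tA : |(A2:ℝ) * z * (q2:ℝ)| - |x * (q0:ℝ) + (A1:ℝ) * y * (q1:ℝ)|
      ≤ |x * (q0:ℝ) + (A1:ℝ) * y * (q1:ℝ) + (A2:ℝ) * z * (q2:ℝ)| := by
    have e : (A2:ℝ) * z * (q2:ℝ) - -(x * (q0:ℝ) + (A1:ℝ) * y * (q1:ℝ))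
        = x * (q0:ℝ) + (A1:ℝ) * y * (q1:ℝ) + (A2:ℝ) * z * (q2:ℝ) := by ring
    have h := abs_sub_abs_le_abs_sub ((A2:ℝ) * z * (q2:ℝ)) (-(x * (q0:ℝ) + (A1:ℝ) * y * (q1:ℝ)))
    rwa [e, abs_neg] at h
  have tB : |x * (q0:ℝ) + (A1:ℝ) * y * (q1:ℝ)| ≤ |x * (q0:ℝ)| + |(A1:ℝ) * y * (q1:ℝ)| :=
    abs_add_le _ _
  have u1 : (A2:ℝ) * |(q2:ℝ)| ≤ (A2:ℝ) * z * |(q2:ℝ)| := by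
    nlinarith [mul_nonneg (Nat.cast_nonneg (α := ℝ) A2) (abs_nonneg (q2:ℝ)), hz.1]
  have t2 : (((A2:ℤ) * |q2| : ℤ) : ℝ) < ((4 * (Q0:ℤ) + 4 * (A1:ℤ) * (Q1:ℤ) : ℤ) : ℝ) + β := by
    push_cast
    rw [h3] at tA
    linarith [habs, h1, h2, tA, tB, u1]
  exact int_le_of_lt_add hβ1 t2
end DED
section CASES

open Finset in
noncomputable def F2A (A2 Q0 Q2 : ℕ) : Finset ℤ :=
  (Finset.Icc (-(Q2:ℤ)) (Q2:ℤ)).filter (fun n => n ≠ 0 ∧ (A2:ℤ) * |n| ≤ 4 * (Q0:ℤ))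

noncomputable def F0A (A2 : ℕ) (n : ℤ) : Finset ℤ :=
  if 0 < n then Finset.Icc (-(4 * (A2:ℤ) * |n|)) (-1) else Finset.Icc 1 (4 * (A2:ℤ) * |n|)

lemma card_F0A {A2 : ℕ} {n : ℤ} : ((F0A A2 n).card : ℝ) ≤ 4 * (A2:ℝ) * |(n:ℝ)| := by
  have hm : (0:ℤ) ≤ 4 * (A2:ℤ) * |n| := by positivity
  have hcard : (F0A A2 n).card = (4 * (A2:ℤ) * |n|).toNat := by
    unfold F0A
    split <;> rw [Int.card_Icc] <;> congr 1 <;> omega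
  rw [hcard]
  have : (((4 * (A2:ℤ) * |n|).toNat : ℤ) : ℝ) = ((4 * (A2:ℤ) * |n| : ℤ) : ℝ) := by
    exact_mod_cast congrArg (Int.cast : ℤ → ℝ) (Int.toNat_of_nonneg hm)
  rw [show (((4 * (A2:ℤ) * |n|).toNat : ℕ) : ℝ) = (((4 * (A2:ℤ) * |n|).toNat : ℤ) : ℝ) by
    push_cast; ring, this]
  push_cast
  ring_nf
  rfl

lemma volUA_le {β : ℝ} (hβ0 : 0 < β) (hβ1 : β ≤ 1) (A1 A2 Q0 Q1 Q2 : ℕ)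
    (hA2 : 0 < A2) (hQ2 : 0 < Q2) :
    volume (⋃ q2 ∈ F2A A2 Q0 Q2, ⋃ q0 ∈ F0A A2 q2, Bset A1 A2 β q0 0 q2)
      ≤ ENNReal.ofReal (576 * β * min (Q2:ℝ) ((Q0:ℝ) / (A2:ℝ))) := by
  have hA2r : (0:ℝ) < (A2:ℝ) := by exact_mod_cast hA2
  have hminn : (0:ℝ) ≤ min (Q2:ℝ) (4 * (Q0:ℝ) / (A2:ℝ)) := by positivity
  have step1 : volume (⋃ q2 ∈ F2A A2 Q0 Q2, ⋃ q0 ∈ F0A A2 q2, Bset A1 A2 β q0 0 q2)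
      ≤ ∑ q2 ∈ F2A A2 Q0 Q2, volume (⋃ q0 ∈ F0A A2 q2, Bset A1 A2 β q0 0 q2) :=
    measure_biUnion_finset_le _ _
  have inner : ∀ q2 ∈ F2A A2 Q0 Q2,
      volume (⋃ q0 ∈ F0A A2 q2, Bset A1 A2 β q0 0 q2) ≤ ENNReal.ofReal (72 * β) := by
    intro q2 hq2
    have hq2ne : q2 ≠ 0 := ((Finset.mem_filter.mp hq2).2).1
    have haq : (0:ℝ) < |(q2:ℝ)| := by
      rw [abs_pos]; exact_mod_cast hq2ne
    calc volume (⋃ q0 ∈ F0A A2 q2, Bset A1 A2 β q0 0 q2)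
        ≤ ∑ q0 ∈ F0A A2 q2, volume (Bset A1 A2 β q0 0 q2) := measure_biUnion_finset_le _ _
      _ ≤ ENNReal.ofReal ((4 * (A2:ℝ) * |(q2:ℝ)|) * (18 * β / ((A2:ℝ) * |(q2:ℝ)|))) := by
          refine finset_sum_le_card_mul (fun q0 _ => vol_Bs3 hβ0.le hA2 hq2ne) card_F0A
            (by positivity)
      _ = ENNReal.ofReal (72 * β) := by
          congr 1
          field_simp
          ring
  have step2 : ∑ q2 ∈ F2A A2 Q0 Q2, volume (⋃ q0 ∈ F0A A2 q2, Bset A1 A2 β q0 0 q2)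
      ≤ ENNReal.ofReal ((2 * min (Q2:ℝ) (4 * (Q0:ℝ) / (A2:ℝ))) * (72 * β)) := by
    refine finset_sum_le_card_mul inner ?_ (by positivity)
    refine card_le_two_mul hminn ?_
    intro n hn
    obtain ⟨hIcc, hne, hb⟩ := Finset.mem_filter.mp hn
    have h1 : |n| ≤ (Q2:ℤ) := abs_le.mpr (Finset.mem_Icc.mp hIcc)
    refine ⟨hne ∘ (by exact fun h => h), ?_⟩
    refine le_min ?_ ?_
    · rw [← Int.cast_abs]; exact_mod_cast h1
    · rw [le_div_iff₀ hA2r]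
      have : ((A2:ℤ) * |n| : ℤ) ≤ ((4 * (Q0:ℤ)) : ℤ) := hb
      have hr : ((A2:ℤ) * |n| : ℝ) ≤ ((4 * (Q0:ℤ)) : ℝ) := by exact_mod_cast this
      push_cast at hr
      linarith
  refine (step1.trans step2).trans (ENNReal.ofReal_le_ofReal ?_)
  have hmin4 : min (Q2:ℝ) (4 * (Q0:ℝ) / (A2:ℝ)) ≤ 4 * min (Q2:ℝ) ((Q0:ℝ) / (A2:ℝ)) := by
    rcases le_total (Q2:ℝ) ((Q0:ℝ) / (A2:ℝ)) with h | h
    · rw [min_eq_left h]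
      refine (min_le_left _ _).trans ?_
      have : (0:ℝ) ≤ (Q2:ℝ) := by positivity
      linarith
    · rw [min_eq_right h]
      refine (min_le_right _ _).trans (le_of_eq ?_)
      ring
  nlinarith [mul_le_mul_of_nonneg_left hmin4 (by positivity : (0:ℝ) ≤ 144 * β)]

end CASES
section CASEB
lemma volUB_le {β : ℝ} (hβ0 : 0 < β) (hβ1 : β ≤ 1) (A1 A2 Q0 Q1 Q2 : ℕ)
    (hA1 : 0 < A1) (hQ1 : 0 < Q1) :
    volume (⋃ q1 ∈ F2A A1 Q0 Q1, ⋃ q0 ∈ F0A A1 q1, Bset A1 A2 β q0 q1 0)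
      ≤ ENNReal.ofReal (576 * β * min (Q1:ℝ) ((Q0:ℝ) / (A1:ℝ))) := by
  have hA1r : (0:ℝ) < (A1:ℝ) := by exact_mod_cast hA1
  have hminn : (0:ℝ) ≤ min (Q1:ℝ) (4 * (Q0:ℝ) / (A1:ℝ)) := by positivity
  have step1 : volume (⋃ q1 ∈ F2A A1 Q0 Q1, ⋃ q0 ∈ F0A A1 q1, Bset A1 A2 β q0 q1 0)
      ≤ ∑ q1 ∈ F2A A1 Q0 Q1, volume (⋃ q0 ∈ F0A A1 q1, Bset A1 A2 β q0 q1 0) :=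
    measure_biUnion_finset_le _ _
  have inner : ∀ q1 ∈ F2A A1 Q0 Q1,
      volume (⋃ q0 ∈ F0A A1 q1, Bset A1 A2 β q0 q1 0) ≤ ENNReal.ofReal (72 * β) := by
    intro q1 hq1
    have hq1ne : q1 ≠ 0 := ((Finset.mem_filter.mp hq1).2).1
    have haq : (0:ℝ) < |(q1:ℝ)| := by
      rw [abs_pos]; exact_mod_cast hq1ne
    calc volume (⋃ q0 ∈ F0A A1 q1, Bset A1 A2 β q0 q1 0)
        ≤ ∑ q0 ∈ F0A A1 q1, volume (Bset A1 A2 β q0 q1 0) := measure_biUnion_finset_le _ _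
      _ ≤ ENNReal.ofReal ((4 * (A1:ℝ) * |(q1:ℝ)|) * (18 * β / ((A1:ℝ) * |(q1:ℝ)|))) := by
          refine finset_sum_le_card_mul (fun q0 _ => vol_Bs2 hβ0.le hA1 hq1ne) card_F0A
            (by positivity)
      _ = ENNReal.ofReal (72 * β) := by
          congr 1
          field_simp
          ring
  have step2 : ∑ q1 ∈ F2A A1 Q0 Q1, volume (⋃ q0 ∈ F0A A1 q1, Bset A1 A2 β q0 q1 0)
      ≤ ENNReal.ofReal ((2 * min (Q1:ℝ) (4 * (Q0:ℝ) / (A1:ℝ))) * (72 * β)) := by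
    refine finset_sum_le_card_mul inner ?_ (by positivity)
    refine card_le_two_mul hminn ?_
    intro n hn
    obtain ⟨hIcc, hne, hb⟩ := Finset.mem_filter.mp hn
    have h1 : |n| ≤ (Q1:ℤ) := abs_le.mpr (Finset.mem_Icc.mp hIcc)
    refine ⟨hne, ?_⟩
    refine le_min ?_ ?_
    · rw [← Int.cast_abs]; exact_mod_cast h1
    · rw [le_div_iff₀ hA1r]
      have hr : ((A1:ℤ) * |n| : ℝ) ≤ ((4 * (Q0:ℤ)) : ℝ) := by exact_mod_cast hb
      push_cast at hr
      linarith
  refine (step1.trans step2).trans (ENNReal.ofReal_le_ofReal ?_)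
  have hmin4 : min (Q1:ℝ) (4 * (Q0:ℝ) / (A1:ℝ)) ≤ 4 * min (Q1:ℝ) ((Q0:ℝ) / (A1:ℝ)) := by
    rcases le_total (Q1:ℝ) ((Q0:ℝ) / (A1:ℝ)) with h | h
    · rw [min_eq_left h]
      refine (min_le_left _ _).trans ?_
      have : (0:ℝ) ≤ (Q1:ℝ) := by positivity
      linarith
    · rw [min_eq_right h]
      refine (min_le_right _ _).trans (le_of_eq ?_)
      ring
  nlinarith [mul_le_mul_of_nonneg_left hmin4 (by positivity : (0:ℝ) ≤ 144 * β)]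
end CASEB
section CASEC

noncomputable def FC1 (A1 A2 Q0 Q1 Q2 : ℕ) : Finset ℤ :=
  (Finset.Icc (-(Q1:ℤ)) (Q1:ℤ)).filter
    (fun n => n ≠ 0 ∧ (A1:ℤ) * |n| ≤ 4 * (Q0:ℤ) + 4 * (A2:ℤ) * (Q2:ℤ))

noncomputable def FC1s (A1 A2 Q2 : ℕ) (m : ℤ) : Finset ℤ :=
  (Finset.Icc (-(Q2:ℤ)) (Q2:ℤ)).filter (fun n => n ≠ 0 ∧ (A2:ℤ) * |n| ≤ (A1:ℤ) * |m|)

lemma cardIcc_le {Q0 : ℕ} (hQ0 : 0 < Q0) :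
    (((Finset.Icc (-(Q0:ℤ)) (Q0:ℤ)).card : ℕ) : ℝ) ≤ 3 * (Q0:ℝ) := by
  rw [Int.card_Icc]
  have h : ((Q0:ℤ) + 1 - -(Q0:ℤ)).toNat = 2 * Q0 + 1 := by omega
  rw [h]
  push_cast
  have : (1:ℝ) ≤ (Q0:ℝ) := by exact_mod_cast hQ0
  linarith

lemma memFC1_abs_le {A1 A2 Q0 Q1 Q2 : ℕ} (hA1 : 0 < A1) {Qt1 : ℝ}
    (hQt1 : Qt1 = min (Q1 : ℝ) (8 * max (Q0 : ℝ) ((A2 : ℝ) * Q2) / (A1 : ℝ)))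
    {n : ℤ} (hn : n ∈ FC1 A1 A2 Q0 Q1 Q2) : |(n:ℝ)| ≤ Qt1 := by
  have hA1r : (0:ℝ) < (A1:ℝ) := by exact_mod_cast hA1
  obtain ⟨hIcc, hne, hb⟩ := Finset.mem_filter.mp hn
  have h1 : |n| ≤ (Q1:ℤ) := abs_le.mpr (Finset.mem_Icc.mp hIcc)
  rw [hQt1]
  refine le_min ?_ ?_
  · rw [← Int.cast_abs]; exact_mod_cast h1
  · rw [le_div_iff₀ hA1r]
    have hr : ((A1:ℤ) * |n| : ℝ) ≤ ((4 * (Q0:ℤ) + 4 * (A2:ℤ) * (Q2:ℤ)) : ℝ) := by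
      exact_mod_cast hb
    push_cast at hr
    have m1 : (Q0:ℝ) ≤ max (Q0:ℝ) ((A2:ℝ) * Q2) := le_max_left _ _
    have m2 : (A2:ℝ) * Q2 ≤ max (Q0:ℝ) ((A2:ℝ) * Q2) := le_max_right _ _
    nlinarith [hr]

lemma volUC1_le {β : ℝ} (hβ0 : 0 < β) (hβ1 : β ≤ 1) (A1 A2 Q0 Q1 Q2 : ℕ)
    (hA1 : 0 < A1) (hA2 : 0 < A2) (hQ0 : 0 < Q0) (Qt1 : ℝ)
    (hQt1 : Qt1 = min (Q1 : ℝ) (8 * max (Q0 : ℝ) ((A2 : ℝ) * Q2) / (A1 : ℝ))) :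
    volume (⋃ q1 ∈ FC1 A1 A2 Q0 Q1 Q2, ⋃ q2 ∈ FC1s A1 A2 Q2 q1,
        ⋃ q0 ∈ Finset.Icc (-(Q0:ℤ)) (Q0:ℤ), Bset A1 A2 β q0 q1 q2)
      ≤ ENNReal.ofReal (504 * β *
          min ((Q2:ℝ) * Qt1) (min ((Q0:ℝ) * Qt1 / (A2:ℝ)) ((A1:ℝ) * Qt1 ^ 2 / (A2:ℝ)))) := by
  have hA1r : (0:ℝ) < (A1:ℝ) := by exact_mod_cast hA1
  have hA2r : (0:ℝ) < (A2:ℝ) := by exact_mod_cast hA2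
  have hQt1nn : 0 ≤ Qt1 := by rw [hQt1]; positivity
  set E : ℤ → ℤ → Set (ℝ × ℝ × ℝ) :=
    fun q1 q2 => ⋃ q0 ∈ Finset.Icc (-(Q0:ℤ)) (Q0:ℤ), Bset A1 A2 β q0 q1 q2 with hE
  have cardF1 : ((FC1 A1 A2 Q0 Q1 Q2).card : ℝ) ≤ 2 * Qt1 :=
    card_le_two_mul hQt1nn (fun n hn =>
      ⟨(Finset.mem_filter.mp hn).2.1, memFC1_abs_le hA1 hQt1 hn⟩)
  have hT : volume (⋃ q1 ∈ FC1 A1 A2 Q0 Q1 Q2, ⋃ q2 ∈ FC1s A1 A2 Q2 q1, E q1 q2)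
      ≤ ∑ q1 ∈ FC1 A1 A2 Q0 Q1 Q2, ∑ q2 ∈ FC1s A1 A2 Q2 q1, volume (E q1 q2) := by
    refine (measure_biUnion_finset_le _ _).trans (Finset.sum_le_sum fun q1 _ => ?_)
    exact measure_biUnion_finset_le _ _
  -- cards of the inner index set
  have cardsA : ∀ q1 : ℤ, ((FC1s A1 A2 Q2 q1).card : ℝ) ≤ 2 * (Q2:ℝ) := by
    intro q1
    refine card_le_two_mul (by positivity) ?_
    intro n hn
    obtain ⟨hIcc, hne, _⟩ := Finset.mem_filter.mp hn
    exact ⟨hne, by rw [← Int.cast_abs]; exact_mod_cast abs_le.mpr (Finset.mem_Icc.mp hIcc)⟩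
  have cardsB : ∀ q1 : ℤ, ((FC1s A1 A2 Q2 q1).card : ℝ)
      ≤ 2 * ((A1:ℝ) * |(q1:ℝ)| / (A2:ℝ)) := by
    intro q1
    refine card_le_two_mul (by positivity) ?_
    intro n hn
    obtain ⟨hIcc, hne, hb⟩ := Finset.mem_filter.mp hn
    refine ⟨hne, ?_⟩
    rw [le_div_iff₀ hA2r]
    have hr : ((A2:ℤ) * |n| : ℝ) ≤ ((A1:ℤ) * |q1| : ℝ) := by exact_mod_cast hb
    push_cast at hr
    linarith
  -- bound (i)
  have B1 : volume (⋃ q1 ∈ FC1 A1 A2 Q0 Q1 Q2, ⋃ q2 ∈ FC1s A1 A2 Q2 q1, E q1 q2)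
      ≤ ENNReal.ofReal (432 * β * ((Q2:ℝ) * Qt1)) := by
    refine hT.trans ?_
    have step : ∑ q1 ∈ FC1 A1 A2 Q0 Q1 Q2, ∑ q2 ∈ FC1s A1 A2 Q2 q1, volume (E q1 q2)
        ≤ ENNReal.ofReal ((2 * Qt1) * ((2 * (Q2:ℝ)) * (108 * β))) := by
      refine finset_sum_le_card_mul (fun q1 _ => ?_) cardF1 (by positivity)
      refine finset_sum_le_card_mul (fun q2 hq2 => ?_) (cardsA q1) (by positivity)
      exact vol_E3 hβ0 hβ1 hA2 (Finset.mem_filter.mp hq2).2.1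
    refine step.trans (ENNReal.ofReal_le_ofReal (le_of_eq (by ring)))
  -- bound (iii)
  have B3 : volume (⋃ q1 ∈ FC1 A1 A2 Q0 Q1 Q2, ⋃ q2 ∈ FC1s A1 A2 Q2 q1, E q1 q2)
      ≤ ENNReal.ofReal (432 * β * ((A1:ℝ) * Qt1 ^ 2 / (A2:ℝ))) := by
    refine hT.trans ?_
    have step : ∑ q1 ∈ FC1 A1 A2 Q0 Q1 Q2, ∑ q2 ∈ FC1s A1 A2 Q2 q1, volume (E q1 q2)
        ≤ ENNReal.ofReal ((2 * Qt1) * ((2 * ((A1:ℝ) * Qt1 / (A2:ℝ))) * (108 * β))) := by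
      refine finset_sum_le_card_mul (fun q1 hq1 => ?_) cardF1 (by positivity)
      have inner : ∑ q2 ∈ FC1s A1 A2 Q2 q1, volume (E q1 q2)
          ≤ ENNReal.ofReal ((2 * ((A1:ℝ) * |(q1:ℝ)| / (A2:ℝ))) * (108 * β)) := by
        refine finset_sum_le_card_mul (fun q2 hq2 => ?_) (cardsB q1) (by positivity)
        exact vol_E3 hβ0 hβ1 hA2 (Finset.mem_filter.mp hq2).2.1
      refine inner.trans (ENNReal.ofReal_le_ofReal ?_)
      have hq1b : |(q1:ℝ)| ≤ Qt1 := memFC1_abs_le hA1 hQt1 hq1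
      gcongr
    refine step.trans (ENNReal.ofReal_le_ofReal (le_of_eq (by ring)))
  -- bound (ii)
  have B2 : volume (⋃ q1 ∈ FC1 A1 A2 Q0 Q1 Q2, ⋃ q2 ∈ FC1s A1 A2 Q2 q1, E q1 q2)
      ≤ ENNReal.ofReal (216 * β * ((Q0:ℝ) * Qt1 / (A2:ℝ))) := by
    refine hT.trans ?_
    have step : ∑ q1 ∈ FC1 A1 A2 Q0 Q1 Q2, ∑ q2 ∈ FC1s A1 A2 Q2 q1, volume (E q1 q2)
        ≤ ENNReal.ofReal ((2 * Qt1) * (108 * (Q0:ℝ) * β / (A2:ℝ))) := by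
      refine finset_sum_le_card_mul (fun q1 hq1 => ?_) cardF1 (by positivity)
      have hq1ne : q1 ≠ 0 := (Finset.mem_filter.mp hq1).2.1
      have haq1 : (0:ℝ) < |(q1:ℝ)| := by rw [abs_pos]; exact_mod_cast hq1ne
      have perpair : ∀ q2 ∈ FC1s A1 A2 Q2 q1,
          volume (E q1 q2)
            ≤ ENNReal.ofReal ((3 * (Q0:ℝ)) * (18 * β / ((A1:ℝ) * |(q1:ℝ)|))) := by
        intro q2 _
        rw [hE]
        refine (measure_biUnion_finset_le _ _).trans ?_
        exact finset_sum_le_card_mul (fun q0 _ => vol_Bs2 hβ0.le hA1 hq1ne) (cardIcc_le hQ0)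
          (by positivity)
      have inner : ∑ q2 ∈ FC1s A1 A2 Q2 q1, volume (E q1 q2)
          ≤ ENNReal.ofReal ((2 * ((A1:ℝ) * |(q1:ℝ)| / (A2:ℝ)))
              * ((3 * (Q0:ℝ)) * (18 * β / ((A1:ℝ) * |(q1:ℝ)|)))) :=
        finset_sum_le_card_mul perpair (cardsB q1) (by positivity)
      refine inner.trans (ENNReal.ofReal_le_ofReal (le_of_eq ?_))
      field_simp
      ring
    refine step.trans (ENNReal.ofReal_le_ofReal (le_of_eq (by ring)))
  -- combine
  rcases le_total ((Q2:ℝ) * Qt1) (min ((Q0:ℝ) * Qt1 / (A2:ℝ)) ((A1:ℝ) * Qt1 ^ 2 / (A2:ℝ)))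
    with h | h
  · rw [min_eq_left h]
    refine B1.trans (ENNReal.ofReal_le_ofReal ?_)
    nlinarith [mul_nonneg (mul_nonneg hβ0.le (Nat.cast_nonneg (α := ℝ) Q2)) hQt1nn]
  · rw [min_eq_right h]
    rcases le_total ((Q0:ℝ) * Qt1 / (A2:ℝ)) ((A1:ℝ) * Qt1 ^ 2 / (A2:ℝ)) with h2 | h2
    · rw [min_eq_left h2]
      refine B2.trans (ENNReal.ofReal_le_ofReal ?_)
      have : (0:ℝ) ≤ (Q0:ℝ) * Qt1 / (A2:ℝ) := by positivity
      nlinarith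
    · rw [min_eq_right h2]
      refine B3.trans (ENNReal.ofReal_le_ofReal ?_)
      have : (0:ℝ) ≤ (A1:ℝ) * Qt1 ^ 2 / (A2:ℝ) := by positivity
      nlinarith
end CASEC
section CASEC2
lemma volUC2_le {β : ℝ} (hβ0 : 0 < β) (hβ1 : β ≤ 1) (A1 A2 Q0 Q1 Q2 : ℕ)
    (hA1 : 0 < A1) (hA2 : 0 < A2) (hQ0 : 0 < Q0) (Qt2 : ℝ)
    (hQt2 : Qt2 = min (Q2 : ℝ) (8 * max (Q0 : ℝ) ((A1 : ℝ) * Q1) / (A2 : ℝ))) :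
    volume (⋃ q2 ∈ FC1 A2 A1 Q0 Q2 Q1, ⋃ q1 ∈ FC1s A2 A1 Q1 q2,
        ⋃ q0 ∈ Finset.Icc (-(Q0:ℤ)) (Q0:ℤ), Bset A1 A2 β q0 q1 q2)
      ≤ ENNReal.ofReal (504 * β *
          min ((Q1:ℝ) * Qt2) (min ((Q0:ℝ) * Qt2 / (A1:ℝ)) ((A2:ℝ) * Qt2 ^ 2 / (A1:ℝ)))) := by
  have hA1r : (0:ℝ) < (A1:ℝ) := by exact_mod_cast hA1
  have hA2r : (0:ℝ) < (A2:ℝ) := by exact_mod_cast hA2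
  have hQt2nn : 0 ≤ Qt2 := by rw [hQt2]; positivity
  set E : ℤ → ℤ → Set (ℝ × ℝ × ℝ) :=
    fun q2 q1 => ⋃ q0 ∈ Finset.Icc (-(Q0:ℤ)) (Q0:ℤ), Bset A1 A2 β q0 q1 q2 with hE
  have cardF2 : ((FC1 A2 A1 Q0 Q2 Q1).card : ℝ) ≤ 2 * Qt2 :=
    card_le_two_mul hQt2nn (fun n hn =>
      ⟨(Finset.mem_filter.mp hn).2.1, memFC1_abs_le hA2 hQt2 hn⟩)
  have hT : volume (⋃ q2 ∈ FC1 A2 A1 Q0 Q2 Q1, ⋃ q1 ∈ FC1s A2 A1 Q1 q2, E q2 q1)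
      ≤ ∑ q2 ∈ FC1 A2 A1 Q0 Q2 Q1, ∑ q1 ∈ FC1s A2 A1 Q1 q2, volume (E q2 q1) := by
    refine (measure_biUnion_finset_le _ _).trans (Finset.sum_le_sum fun q2 _ => ?_)
    exact measure_biUnion_finset_le _ _
  have cardsA : ∀ q2 : ℤ, ((FC1s A2 A1 Q1 q2).card : ℝ) ≤ 2 * (Q1:ℝ) := by
    intro q2
    refine card_le_two_mul (by positivity) ?_
    intro n hn
    obtain ⟨hIcc, hne, _⟩ := Finset.mem_filter.mp hn
    exact ⟨hne, by rw [← Int.cast_abs]; exact_mod_cast abs_le.mpr (Finset.mem_Icc.mp hIcc)⟩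
  have cardsB : ∀ q2 : ℤ, ((FC1s A2 A1 Q1 q2).card : ℝ)
      ≤ 2 * ((A2:ℝ) * |(q2:ℝ)| / (A1:ℝ)) := by
    intro q2
    refine card_le_two_mul (by positivity) ?_
    intro n hn
    obtain ⟨hIcc, hne, hb⟩ := Finset.mem_filter.mp hn
    refine ⟨hne, ?_⟩
    rw [le_div_iff₀ hA1r]
    have hr : ((A1:ℤ) * |n| : ℝ) ≤ ((A2:ℤ) * |q2| : ℝ) := by exact_mod_cast hb
    push_cast at hr
    linarith
  have B1 : volume (⋃ q2 ∈ FC1 A2 A1 Q0 Q2 Q1, ⋃ q1 ∈ FC1s A2 A1 Q1 q2, E q2 q1)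
      ≤ ENNReal.ofReal (432 * β * ((Q1:ℝ) * Qt2)) := by
    refine hT.trans ?_
    have step : ∑ q2 ∈ FC1 A2 A1 Q0 Q2 Q1, ∑ q1 ∈ FC1s A2 A1 Q1 q2, volume (E q2 q1)
        ≤ ENNReal.ofReal ((2 * Qt2) * ((2 * (Q1:ℝ)) * (108 * β))) := by
      refine finset_sum_le_card_mul (fun q2 _ => ?_) cardF2 (by positivity)
      refine finset_sum_le_card_mul (fun q1 hq1 => ?_) (cardsA q2) (by positivity)
      exact vol_E2 hβ0 hβ1 hA1 (Finset.mem_filter.mp hq1).2.1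
    refine step.trans (ENNReal.ofReal_le_ofReal (le_of_eq (by ring)))
  have B3 : volume (⋃ q2 ∈ FC1 A2 A1 Q0 Q2 Q1, ⋃ q1 ∈ FC1s A2 A1 Q1 q2, E q2 q1)
      ≤ ENNReal.ofReal (432 * β * ((A2:ℝ) * Qt2 ^ 2 / (A1:ℝ))) := by
    refine hT.trans ?_
    have step : ∑ q2 ∈ FC1 A2 A1 Q0 Q2 Q1, ∑ q1 ∈ FC1s A2 A1 Q1 q2, volume (E q2 q1)
        ≤ ENNReal.ofReal ((2 * Qt2) * ((2 * ((A2:ℝ) * Qt2 / (A1:ℝ))) * (108 * β))) := by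
      refine finset_sum_le_card_mul (fun q2 hq2 => ?_) cardF2 (by positivity)
      have inner : ∑ q1 ∈ FC1s A2 A1 Q1 q2, volume (E q2 q1)
          ≤ ENNReal.ofReal ((2 * ((A2:ℝ) * |(q2:ℝ)| / (A1:ℝ))) * (108 * β)) := by
        refine finset_sum_le_card_mul (fun q1 hq1 => ?_) (cardsB q2) (by positivity)
        exact vol_E2 hβ0 hβ1 hA1 (Finset.mem_filter.mp hq1).2.1
      refine inner.trans (ENNReal.ofReal_le_ofReal ?_)
      have hq2b : |(q2:ℝ)| ≤ Qt2 := memFC1_abs_le hA2 hQt2 hq2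
      gcongr
    refine step.trans (ENNReal.ofReal_le_ofReal (le_of_eq (by ring)))
  have B2 : volume (⋃ q2 ∈ FC1 A2 A1 Q0 Q2 Q1, ⋃ q1 ∈ FC1s A2 A1 Q1 q2, E q2 q1)
      ≤ ENNReal.ofReal (216 * β * ((Q0:ℝ) * Qt2 / (A1:ℝ))) := by
    refine hT.trans ?_
    have step : ∑ q2 ∈ FC1 A2 A1 Q0 Q2 Q1, ∑ q1 ∈ FC1s A2 A1 Q1 q2, volume (E q2 q1)
        ≤ ENNReal.ofReal ((2 * Qt2) * (108 * (Q0:ℝ) * β / (A1:ℝ))) := by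
      refine finset_sum_le_card_mul (fun q2 hq2 => ?_) cardF2 (by positivity)
      have hq2ne : q2 ≠ 0 := (Finset.mem_filter.mp hq2).2.1
      have haq2 : (0:ℝ) < |(q2:ℝ)| := by rw [abs_pos]; exact_mod_cast hq2ne
      have perpair : ∀ q1 ∈ FC1s A2 A1 Q1 q2,
          volume (E q2 q1)
            ≤ ENNReal.ofReal ((3 * (Q0:ℝ)) * (18 * β / ((A2:ℝ) * |(q2:ℝ)|))) := by
        intro q1 _
        rw [hE]
        refine (measure_biUnion_finset_le _ _).trans ?_
        exact finset_sum_le_card_mul (fun q0 _ => vol_Bs3 hβ0.le hA2 hq2ne) (cardIcc_le hQ0)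
          (by positivity)
      have inner : ∑ q1 ∈ FC1s A2 A1 Q1 q2, volume (E q2 q1)
          ≤ ENNReal.ofReal ((2 * ((A2:ℝ) * |(q2:ℝ)| / (A1:ℝ)))
              * ((3 * (Q0:ℝ)) * (18 * β / ((A2:ℝ) * |(q2:ℝ)|)))) :=
        finset_sum_le_card_mul perpair (cardsB q2) (by positivity)
      refine inner.trans (ENNReal.ofReal_le_ofReal (le_of_eq ?_))
      field_simp
      ring
    refine step.trans (ENNReal.ofReal_le_ofReal (le_of_eq (by ring)))
  rcases le_total ((Q1:ℝ) * Qt2) (min ((Q0:ℝ) * Qt2 / (A1:ℝ)) ((A2:ℝ) * Qt2 ^ 2 / (A1:ℝ)))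
    with h | h
  · rw [min_eq_left h]
    refine B1.trans (ENNReal.ofReal_le_ofReal ?_)
    nlinarith [mul_nonneg (mul_nonneg hβ0.le (Nat.cast_nonneg (α := ℝ) Q1)) hQt2nn]
  · rw [min_eq_right h]
    rcases le_total ((Q0:ℝ) * Qt2 / (A1:ℝ)) ((A2:ℝ) * Qt2 ^ 2 / (A1:ℝ)) with h2 | h2
    · rw [min_eq_left h2]
      refine B2.trans (ENNReal.ofReal_le_ofReal ?_)
      have : (0:ℝ) ≤ (Q0:ℝ) * Qt2 / (A1:ℝ) := by positivity
      nlinarith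
    · rw [min_eq_right h2]
      refine B3.trans (ENNReal.ofReal_le_ofReal ?_)
      have : (0:ℝ) ≤ (A2:ℝ) * Qt2 ^ 2 / (A1:ℝ) := by positivity
      nlinarith
end CASEC2
section FINAL

lemma mem_F0A {A2 : ℕ} {q0 q2 : ℤ} (hsign : q0 * q2 < 0) (h1le : 1 ≤ |q0|)
    (hle : |q0| ≤ 4 * (A2:ℤ) * |q2|) : q0 ∈ F0A A2 q2 := by
  unfold F0A
  by_cases hp : 0 < q2
  · rw [if_pos hp]
    have hq0n : q0 < 0 := by
      by_contra hc
      push_neg at hc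
      exact absurd (mul_nonneg hc hp.le) (not_le.mpr hsign)
    rw [Finset.mem_Icc]
    rw [abs_of_neg hq0n] at h1le hle
    constructor <;> linarith
  · rw [if_neg hp]
    have hq2ne : q2 ≠ 0 := by
      intro h; rw [h, mul_zero] at hsign; exact absurd hsign (lt_irrefl 0)
    have hq2n : q2 < 0 := lt_of_le_of_ne (not_lt.mp hp) hq2ne
    have hq0p : 0 < q0 := by
      by_contra hc
      push_neg at hc
      nlinarith [mul_nonneg (neg_nonneg.mpr hc) (neg_nonneg.mpr hq2n.le), hsign]
    rw [Finset.mem_Icc]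
    rw [abs_of_pos hq0p] at h1le hle
    constructor <;> linarith

lemma cover {β : ℝ} (hβ0 : 0 < β) (hβ1 : β ≤ 1) (A1 A2 Q0 Q1 Q2 : ℕ)
    (hA1 : 0 < A1) (hA2 : 0 < A2) :
    (⋃ (q0 : ℤ) (q1 : ℤ) (q2 : ℤ) (_ : (q0, q1, q2) ≠ (0, 0, 0))
        (_ : |q0| ≤ (Q0 : ℤ)) (_ : |q1| ≤ (Q1 : ℤ)) (_ : |q2| ≤ (Q2 : ℤ)),
        Bset A1 A2 β q0 q1 q2)
      ⊆ (⋃ q2 ∈ F2A A2 Q0 Q2, ⋃ q0 ∈ F0A A2 q2, Bset A1 A2 β q0 0 q2)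
        ∪ ((⋃ q1 ∈ F2A A1 Q0 Q1, ⋃ q0 ∈ F0A A1 q1, Bset A1 A2 β q0 q1 0)
        ∪ ((⋃ q1 ∈ FC1 A1 A2 Q0 Q1 Q2, ⋃ q2 ∈ FC1s A1 A2 Q2 q1,
            ⋃ q0 ∈ Finset.Icc (-(Q0:ℤ)) (Q0:ℤ), Bset A1 A2 β q0 q1 q2)
        ∪ (⋃ q2 ∈ FC1 A2 A1 Q0 Q2 Q1, ⋃ q1 ∈ FC1s A2 A1 Q1 q2,
            ⋃ q0 ∈ Finset.Icc (-(Q0:ℤ)) (Q0:ℤ), Bset A1 A2 β q0 q1 q2))) := by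
  simp only [Set.iUnion_subset_iff]
  intro q0 q1 q2 hne h0 h1 h2 g hg
  obtain ⟨hgx, hgy, hgz, habs⟩ := hg
  by_cases hq1 : q1 = 0
  · by_cases hq2 : q2 = 0
    · exfalso
      subst hq1; subst hq2
      have hq0 : q0 ≠ 0 := by simpa using hne
      have habs' : |g.1 * (q0:ℝ)| < β := by
        have e : g.1 * (q0:ℝ) + (A1:ℝ) * g.2.1 * ((0:ℤ):ℝ) + (A2:ℝ) * g.2.2 * ((0:ℤ):ℝ)
            = g.1 * (q0:ℝ) := by push_cast; ring
        rwa [e] at habs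
      have hq0r : (1:ℝ) ≤ |(q0:ℝ)| := by
        rw [← Int.cast_abs]; exact_mod_cast Int.one_le_abs hq0
      rw [abs_mul, abs_of_nonneg (by linarith [hgx.1] : (0:ℝ) ≤ g.1)] at habs'
      nlinarith [hgx.1, abs_nonneg (q0:ℝ)]
    · -- case A
      subst hq1
      left
      have habs' : |g.1 * (q0:ℝ) + (A2:ℝ) * g.2.2 * (q2:ℝ)| < β := by
        have e : g.1 * (q0:ℝ) + (A1:ℝ) * g.2.1 * ((0:ℤ):ℝ) + (A2:ℝ) * g.2.2 * (q2:ℝ)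
            = g.1 * (q0:ℝ) + (A2:ℝ) * g.2.2 * (q2:ℝ) := by push_cast; ring
        rwa [e] at habs
      obtain ⟨hsign, h1le, hle, hA2le⟩ := caseAB hβ0 hβ1 hgx hgz hA2 hq2 h0 habs'
      simp only [Set.mem_iUnion]
      refine ⟨q2, ?_, q0, mem_F0A hsign h1le hle, ⟨hgx, hgy, hgz, habs⟩⟩
      exact Finset.mem_filter.mpr ⟨Finset.mem_Icc.mpr (abs_le.mp h2), hq2, hA2le⟩
  · by_cases hq2 : q2 = 0
    · -- case B
      subst hq2
      right; left
      have habs' : |g.1 * (q0:ℝ) + (A1:ℝ) * g.2.1 * (q1:ℝ)| < β := by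
        have e : g.1 * (q0:ℝ) + (A1:ℝ) * g.2.1 * (q1:ℝ) + (A2:ℝ) * g.2.2 * ((0:ℤ):ℝ)
            = g.1 * (q0:ℝ) + (A1:ℝ) * g.2.1 * (q1:ℝ) := by push_cast; ring
        rwa [e] at habs
      obtain ⟨hsign, h1le, hle, hA1le⟩ := caseAB hβ0 hβ1 hgx hgy hA1 hq1 h0 habs'
      simp only [Set.mem_iUnion]
      refine ⟨q1, ?_, q0, mem_F0A hsign h1le hle, ⟨hgx, hgy, hgz, habs⟩⟩
      exact Finset.mem_filter.mpr ⟨Finset.mem_Icc.mpr (abs_le.mp h1), hq1, hA1le⟩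
    · by_cases hcmp : (A2:ℤ) * |q2| ≤ (A1:ℤ) * |q1|
      · -- case C1
        right; right; left
        simp only [Set.mem_iUnion]
        refine ⟨q1, ?_, q2, ?_, q0, Finset.mem_Icc.mpr (abs_le.mp h0), ⟨hgx, hgy, hgz, habs⟩⟩
        · exact Finset.mem_filter.mpr ⟨Finset.mem_Icc.mpr (abs_le.mp h1), hq1,
            caseC1 hβ1 hgx hgy hgz hA1 h0 h2 habs⟩
        · exact Finset.mem_filter.mpr ⟨Finset.mem_Icc.mpr (abs_le.mp h2), hq2, hcmp⟩
      · -- case C2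
        right; right; right
        simp only [Set.mem_iUnion]
        refine ⟨q2, ?_, q1, ?_, q0, Finset.mem_Icc.mpr (abs_le.mp h0), ⟨hgx, hgy, hgz, habs⟩⟩
        · exact Finset.mem_filter.mpr ⟨Finset.mem_Icc.mpr (abs_le.mp h2), hq2,
            caseC2 hβ1 hgx hgy hgz hA2 h0 h1 habs⟩
        · exact Finset.mem_filter.mpr ⟨Finset.mem_Icc.mpr (abs_le.mp h1), hq1,
            (not_le.mp hcmp).le⟩
end FINAL

/-- non-asymptotic asymmetric extension of Groshev's theorem
(Lemma 6 of the paper). -/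
theorem stmt_0 (β : ℝ) (hβ : β ∈ Set.Ioc (0:ℝ) 1)
    (A1 A2 Q0 Q1 Q2 : ℕ) (hA1 : 0 < A1) (hA2 : 0 < A2)
    (hQ0 : 0 < Q0) (hQ1 : 0 < Q1) (hQ2 : 0 < Q2)
    (Qt1 Qt2 : ℝ)
    (hQt1 : Qt1 = min (Q1 : ℝ) (8 * max (Q0 : ℝ) ((A2 : ℝ) * Q2) / (A1 : ℝ)))
    (hQt2 : Qt2 = min (Q2 : ℝ) (8 * max (Q0 : ℝ) ((A1 : ℝ) * Q1) / (A2 : ℝ))) :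
    volume (⋃ (q0 : ℤ) (q1 : ℤ) (q2 : ℤ) (_ : (q0, q1, q2) ≠ (0, 0, 0))
        (_ : |q0| ≤ (Q0 : ℤ)) (_ : |q1| ≤ (Q1 : ℤ)) (_ : |q2| ≤ (Q2 : ℤ)),
        {g : ℝ × ℝ × ℝ |
          g.1 ∈ Set.Ioc (1:ℝ) 4 ∧ g.2.1 ∈ Set.Ioc (1:ℝ) 4 ∧ g.2.2 ∈ Set.Ioc (1:ℝ) 4 ∧
          |g.1 * (q0 : ℝ) + (A1 : ℝ) * g.2.1 * (q1 : ℝ) + (A2 : ℝ) * g.2.2 * (q2 : ℝ)| < β})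
      ≤ ENNReal.ofReal (504 * β *
          (2 * min (Q2 : ℝ) ((Q0 : ℝ) / (A2 : ℝ))
            + min ((Q1 : ℝ) * Qt2) (min ((Q0 : ℝ) * Qt2 / (A1 : ℝ)) ((A2 : ℝ) * Qt2 ^ 2 / (A1 : ℝ)))
            + 2 * min (Q1 : ℝ) ((Q0 : ℝ) / (A1 : ℝ))
            + min ((Q2 : ℝ) * Qt1) (min ((Q0 : ℝ) * Qt1 / (A2 : ℝ)) ((A1 : ℝ) * Qt1 ^ 2 / (A2 : ℝ))))) := by
  obtain ⟨hβ0, hβ1⟩ := hβ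
  have hcov := cover hβ0 hβ1 A1 A2 Q0 Q1 Q2 hA1 hA2
  refine le_trans (measure_mono hcov) ?_
  refine le_trans (measure_union_le _ _) ?_
  refine le_trans (add_le_add_right (measure_union_le _ _) _) ?_
  refine le_trans (add_le_add_right (add_le_add_right (measure_union_le _ _) _) _) ?_
  have HA := volUA_le hβ0 hβ1 A1 A2 Q0 Q1 Q2 hA2 hQ2
  have HB := volUB_le hβ0 hβ1 A1 A2 Q0 Q1 Q2 hA1 hQ1
  have HC1 := volUC1_le hβ0 hβ1 A1 A2 Q0 Q1 Q2 hA1 hA2 hQ0 Qt1 hQt1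
  have HC2 := volUC2_le hβ0 hβ1 A1 A2 Q0 Q1 Q2 hA1 hA2 hQ0 Qt2 hQt2
  refine le_trans (add_le_add HA (add_le_add HB (add_le_add HC1 HC2))) ?_
  have hQt1nn : 0 ≤ Qt1 := by rw [hQt1]; positivity
  have hQt2nn : 0 ≤ Qt2 := by rw [hQt2]; positivity
  have hm2 : (0:ℝ) ≤ min (Q2:ℝ) ((Q0:ℝ)/(A2:ℝ)) := le_min (by positivity) (by positivity)
  have hm1 : (0:ℝ) ≤ min (Q1:ℝ) ((Q0:ℝ)/(A1:ℝ)) := le_min (by positivity) (by positivity)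
  have hP1 : (0:ℝ) ≤ min ((Q2:ℝ) * Qt1) (min ((Q0:ℝ) * Qt1 / (A2:ℝ)) ((A1:ℝ) * Qt1 ^ 2 / (A2:ℝ))) :=
    le_min (by positivity) (le_min (by positivity) (by positivity))
  have hP2 : (0:ℝ) ≤ min ((Q1:ℝ) * Qt2) (min ((Q0:ℝ) * Qt2 / (A1:ℝ)) ((A2:ℝ) * Qt2 ^ 2 / (A1:ℝ))) :=
    le_min (by positivity) (le_min (by positivity) (by positivity))
  have n1 : (0:ℝ) ≤ 576 * β * min (Q2:ℝ) ((Q0:ℝ)/(A2:ℝ)) := by positivity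
  have n2 : (0:ℝ) ≤ 576 * β * min (Q1:ℝ) ((Q0:ℝ)/(A1:ℝ)) := by positivity
  have n3 : (0:ℝ) ≤ 504 * β *
      min ((Q2:ℝ) * Qt1) (min ((Q0:ℝ) * Qt1 / (A2:ℝ)) ((A1:ℝ) * Qt1 ^ 2 / (A2:ℝ))) := by
    have := hP1; nlinarith
  have n4 : (0:ℝ) ≤ 504 * β *
      min ((Q1:ℝ) * Qt2) (min ((Q0:ℝ) * Qt2 / (A1:ℝ)) ((A2:ℝ) * Qt2 ^ 2 / (A1:ℝ))) := by
    have := hP2; nlinarith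
  rw [← ENNReal.ofReal_add n3 n4, ← ENNReal.ofReal_add n2 (by linarith),
    ← ENNReal.ofReal_add n1 (by linarith)]
  apply ENNReal.ofReal_le_ofReal
  have e1 : (0:ℝ) ≤ β * min (Q2:ℝ) ((Q0:ℝ)/(A2:ℝ)) := mul_nonneg hβ0.le hm2
  have e2 : (0:ℝ) ≤ β * min (Q1:ℝ) ((Q0:ℝ)/(A1:ℝ)) := mul_nonneg hβ0.le hm1
  nlinarith [e1, e2]
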